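/- Let Ω ⊂ ℂⁿ be open, let u be a real-valued C² plurisubharmonic function on Ω with det H(u) = ψ, where ψ is a positive continuous function on Ω. Let ε > 0 and let z ∈ Ω be such that the closed ball B̄(z,ε) ⊂ Ω. Then Σ_{i,j} u^{ij̄}(z) (u_{ij̄})_ε(z) ≥ n ψ(z)^{−1/n} (ψ^{1/n})_ε(z), where for a continuous function f, f_ε(z) := (1/λ(B(z,ε))) ∫_{B(z,ε)} f dλ denotes its average over B(z,ε). -/

import Mathlib

open MeasureTheory Complex Metric Matrix
open scoped ComplexOrder

noncomputable section

instance (n : ℕ) : MeasureSpace (EuclideanSpace ℂ (Fin n)) :=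
  { volume := Measure.map (WithLp.toLp 2) (volume : Measure (Fin n → ℂ)) }

/-- The Wirtinger derivative `∂f/∂z_j`. -/
def wdz {n : ℕ} (j : Fin n) (f : EuclideanSpace ℂ (Fin n) → ℂ)
    (z : EuclideanSpace ℂ (Fin n)) : ℂ :=
  (1 / 2) * (fderiv ℝ f z (EuclideanSpace.single j 1)
    - Complex.I * fderiv ℝ f z (EuclideanSpace.single j Complex.I))

/-- The conjugate Wirtinger derivative `∂f/∂z̄_j`. -/
def wdzbar {n : ℕ} (j : Fin n) (f : EuclideanSpace ℂ (Fin n) → ℂ)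
    (z : EuclideanSpace ℂ (Fin n)) : ℂ :=
  (1 / 2) * (fderiv ℝ f z (EuclideanSpace.single j 1)
    + Complex.I * fderiv ℝ f z (EuclideanSpace.single j Complex.I))

/-- The complex Hessian `(u_{i j̄}) = (∂²u/∂z_i∂z̄_j)` of a real-valued function. -/
def cHess {n : ℕ} (u : EuclideanSpace ℂ (Fin n) → ℝ) (z : EuclideanSpace ℂ (Fin n)) :
    Matrix (Fin n) (Fin n) ℂ :=
  Matrix.of fun i j => wdz i (fun w => wdzbar j (fun v => ((u v : ℝ) : ℂ)) w) z

/-- `Δu = Σ_j u_{j j̄}` (one quarter of the real Laplacian). -/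
def cLap {n : ℕ} (u : EuclideanSpace ℂ (Fin n) → ℝ) (z : EuclideanSpace ℂ (Fin n)) : ℝ :=
  ((cHess u z).trace).re

/-- `(u^{i j̄})`, the transposed inverse of the complex Hessian. -/
def cHessInvT {n : ℕ} (u : EuclideanSpace ℂ (Fin n) → ℝ) (z : EuclideanSpace ℂ (Fin n)) :
    Matrix (Fin n) (Fin n) ℂ :=
  ((cHess u z)⁻¹)ᵀ

/-! ### Auxiliary lemmas -/

instance (n : ℕ) : OpensMeasurableSpace (EuclideanSpace ℂ (Fin n)) :=
  inferInstance

instance (n : ℕ) : IsFiniteMeasureOnCompacts (volume : Measure (EuclideanSpace ℂ (Fin n))) :=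
  Measure.IsFiniteMeasureOnCompacts.map (volume : Measure (Fin n → ℂ)) (PiLp.homeomorph 2 (fun _ : Fin n => ℂ)).symm

theorem cHess_entry_continuousOn {n : ℕ} {Ω : Set (EuclideanSpace ℂ (Fin n))} (hΩ : IsOpen Ω)
    {u : EuclideanSpace ℂ (Fin n) → ℝ} (hu : ContDiffOn ℝ 2 u Ω) (i j : Fin n) :
    ContinuousOn (fun w => cHess u w i j) Ω := by
  have hf : ContDiffOn ℝ 2 (fun x => ((u x : ℝ) : ℂ)) Ω :=
    Complex.ofRealCLM.contDiff.comp_contDiffOn hu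
  have hD : ∀ v, ContDiffOn ℝ 1
      (fun w => fderiv ℝ (fun x => ((u x : ℝ) : ℂ)) w v) Ω := fun v =>
    (hf.fderiv_of_isOpen hΩ le_rfl).clm_apply contDiffOn_const
  have hg : ContDiffOn ℝ 1 (fun w => wdzbar j (fun v => ((u v : ℝ) : ℂ)) w) Ω := by
    unfold wdzbar
    exact contDiffOn_const.mul ((hD _).add (contDiffOn_const.mul (hD _)))
  have hDg : ContinuousOn
      (fun w => fderiv ℝ (fun w => wdzbar j (fun v => ((u v : ℝ) : ℂ)) w) w) Ω :=
    hg.continuousOn_fderiv_of_isOpen hΩ le_rfl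
  have hh : ∀ v, ContinuousOn
      (fun w => fderiv ℝ (fun w => wdzbar j (fun v => ((u v : ℝ) : ℂ)) w) w v) Ω :=
    fun v => hDg.clm_apply continuousOn_const
  simp only [cHess, Matrix.of_apply, wdz]
  exact continuousOn_const.mul ((hh _).sub (continuousOn_const.mul (hh _)))

theorem trace_eq_sum_eig {n : ℕ} {A : Matrix (Fin n) (Fin n) ℂ} (hA : A.IsHermitian) :
    A.trace = ∑ i, (hA.eigenvalues i : ℂ) := by
  conv_lhs => rw [hA.spectral_theorem, Unitary.conjStarAlgAut_apply]
  rw [Matrix.trace_mul_cycle,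
    Unitary.coe_star_mul_self hA.eigenvectorUnitary, Matrix.one_mul, Matrix.trace_diagonal]
  rfl

theorem amgm_psd {n : ℕ} (hn : 0 < n) {M : Matrix (Fin n) (Fin n) ℂ} (hM : M.PosSemidef)
    {c : ℝ} (hc : M.det = (c : ℂ)) :
    (n : ℝ) * c ^ ((1 : ℝ) / n) ≤ M.trace.re := by
  have he : ∀ i, 0 ≤ hM.1.eigenvalues i := hM.eigenvalues_nonneg
  have hdet : c = ∏ i, hM.1.eigenvalues i := by
    have := hM.1.det_eq_prod_eigenvalues
    rw [hc] at this
    rw [← RCLike.ofReal_prod] at this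
    exact RCLike.ofReal_injective (K := ℂ) this
  have htr : M.trace.re = ∑ i, hM.1.eigenvalues i := by
    rw [trace_eq_sum_eig hM.1]
    simp
  rw [htr, hdet]
  have hgm := Real.geom_mean_le_arith_mean_weighted Finset.univ (fun _ => (1:ℝ)/n)
    (fun i => hM.1.eigenvalues i) (fun i _ => by positivity)
    (by simp [Finset.card_univ]; field_simp) (fun i _ => he i)
  calc (n : ℝ) * (∏ i, hM.1.eigenvalues i) ^ ((1:ℝ)/n)
      = (n : ℝ) * ∏ i, (hM.1.eigenvalues i) ^ ((1:ℝ)/n) := by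
        rw [← Real.finset_prod_rpow _ _ (fun i _ => he i)]
    _ ≤ (n : ℝ) * ∑ i, ((1:ℝ)/n) * hM.1.eigenvalues i := by
        exact mul_le_mul_of_nonneg_left hgm (by positivity)
    _ = ∑ i, hM.1.eigenvalues i := by
        rw [Finset.mul_sum]
        field_simp

open scoped MatrixOrder in
theorem key_trace_ineq {n : ℕ} (hn : 0 < n) {A B : Matrix (Fin n) (Fin n) ℂ}
    (hA : A.PosDef) (hB : B.PosSemidef) {a b : ℝ}
    (hdA : A.det = (a : ℂ)) (hdB : B.det = (b : ℂ)) :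
    (n : ℝ) * (b / a) ^ ((1 : ℝ) / n) ≤ ((A⁻¹ * B).trace).re := by
  have hAi : (A⁻¹).PosDef := hA.inv
  set S := CFC.sqrt (A⁻¹) with hS
  have hSh : S.IsHermitian := (CFC.sqrt_nonneg (A⁻¹)).posSemidef.1
  have hSS : S * S = A⁻¹ := CFC.sqrt_mul_sqrt_self (A⁻¹) hAi.posSemidef.nonneg
  have hM : (S * B * S).PosSemidef := by
    have := hB.mul_mul_conjTranspose_same S
    rwa [hSh.eq] at this
  have htr : (A⁻¹ * B).trace = (S * B * S).trace := by
    rw [← hSS, Matrix.mul_assoc, Matrix.trace_mul_comm]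
  have hdS2 : S.det * S.det = (a : ℂ)⁻¹ := by
    have : (S * S).det = (A⁻¹).det := by rw [hSS]
    rwa [Matrix.det_mul, Matrix.det_nonsing_inv, hdA, Ring.inverse_eq_inv] at this
  have hdM : (S * B * S).det = ((b / a : ℝ) : ℂ) := by
    rw [Matrix.det_mul, Matrix.det_mul, hdB, mul_comm S.det _, mul_assoc, hdS2]
    push_cast
    ring
  have := amgm_psd hn hM hdM
  rw [htr]
  exact this

theorem posDef_of_det_ne_zero {n : ℕ} {A : Matrix (Fin n) (Fin n) ℂ}
    (hA : A.PosSemidef) (hd : A.det ≠ 0) : A.PosDef := by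
  exact hA.posDef_iff_det_ne_zero.mpr hd

/-- For a plurisubharmonic solution of `det H(u) = ψ > 0`, the ball averages
of the complex Hessian satisfy `Σ u^{i j̄}(z) (u_{i j̄})_ε(z) ≥ n ψ(z)^{-1/n} (ψ^{1/n})_ε(z)`. -/
theorem hessian_average_inequality
    (n : ℕ) (Ω : Set (EuclideanSpace ℂ (Fin n))) (hΩ : IsOpen Ω)
    (u ψ : EuclideanSpace ℂ (Fin n) → ℝ)
    (hu : ContDiffOn ℝ 2 u Ω)
    (hpsh : ∀ w ∈ Ω, (cHess u w).PosSemidef)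
    (hψc : ContinuousOn ψ Ω)
    (hψpos : ∀ w ∈ Ω, 0 < ψ w)
    (hMA : ∀ w ∈ Ω, (cHess u w).det = (ψ w : ℂ))
    (ε : ℝ) (hε : 0 < ε)
    (z : EuclideanSpace ℂ (Fin n)) (hz : z ∈ Ω) (hball : closedBall z ε ⊆ Ω) :
    (n : ℝ) * ψ z ^ (-(1 : ℝ) / n) * (⨍ w in ball z ε, ψ w ^ ((1 : ℝ) / n))
      ≤ (∑ i, ∑ j, cHessInvT u z i j * ⨍ w in ball z ε, cHess u w i j).re := by
  classical
  rcases Nat.eq_zero_or_pos n with hn | hn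
  · subst hn
    simp
  have hψz : 0 < ψ z := hψpos z hz
  have hA : (cHess u z).PosDef := posDef_of_det_ne_zero (hpsh z hz)
    (by rw [hMA z hz]; exact_mod_cast hψz.ne')
  have hsub : ball z ε ⊆ Ω := fun w hw => hball (ball_subset_closedBall hw)
  have hBint : ∀ i j, IntegrableOn (fun w => cHess u w i j) (ball z ε) := fun i j =>
    (((cHess_entry_continuousOn hΩ hu i j).mono hball).integrableOn_compact
      (isCompact_closedBall z ε)).mono_set ball_subset_closedBall
  set G : EuclideanSpace ℂ (Fin n) → ℂ :=
    fun w => ∑ i, ∑ j, cHessInvT u z i j * cHess u w i j with hG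
  have hGint : IntegrableOn G (ball z ε) := by
    apply integrable_finset_sum
    intro i _
    apply integrable_finset_sum
    intro j _
    exact (hBint i j).const_mul _
  have hGtrace : ∀ w, G w = (((cHess u z)⁻¹) * cHess u w).trace := by
    intro w
    show (∑ i, ∑ j, cHessInvT u z i j * cHess u w i j) = _
    simp only [cHessInvT, Matrix.transpose_apply, Matrix.trace, Matrix.diag, Matrix.mul_apply]
    rw [Finset.sum_comm]
  set c : ℝ := (volume (ball z ε)).toReal⁻¹ with hc
  have hc0 : 0 ≤ c := by positivity
  have hRHS : (∑ i, ∑ j, cHessInvT u z i j * ⨍ w in ball z ε, cHess u w i j).re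
      = c * ∫ w in ball z ε, ((((cHess u z)⁻¹) * cHess u w).trace).re := by
    have h1 : ∀ i j, cHessInvT u z i j * (⨍ w in ball z ε, cHess u w i j)
        = c • (cHessInvT u z i j * ∫ w in ball z ε, cHess u w i j) := by
      intro i j
      rw [setAverage_eq, measureReal_def, mul_smul_comm]
    calc (∑ i, ∑ j, cHessInvT u z i j * ⨍ w in ball z ε, cHess u w i j).re
        = (c • ∑ i, ∑ j, cHessInvT u z i j * ∫ w in ball z ε, cHess u w i j).re := by
          rw [Finset.smul_sum]
          congr 1
          refine Finset.sum_congr rfl fun i _ => ?_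
          rw [Finset.smul_sum]
          exact Finset.sum_congr rfl fun j _ => h1 i j
      _ = c * (∑ i, ∑ j, cHessInvT u z i j * ∫ w in ball z ε, cHess u w i j).re := by
          rw [Complex.smul_re, smul_eq_mul]
      _ = c * (∫ w in ball z ε, G w).re := by
          congr 2
          rw [hG]
          beta_reduce
          rw [integral_finset_sum (f := fun i w => ∑ j, cHessInvT u z i j * cHess u w i j) _ (fun i _ => integrable_finset_sum _
            (fun j _ => (hBint i j).const_mul _))]
          refine Finset.sum_congr rfl fun i _ => ?_
          rw [integral_finset_sum _ (fun j _ => (hBint i j).const_mul _)]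
          exact Finset.sum_congr rfl fun j _ => (integral_const_mul _ _).symm
      _ = c * ∫ w in ball z ε, (G w).re := by
          congr 1
          rw [← RCLike.re_eq_complex_re, ← integral_re hGint]
      _ = c * ∫ w in ball z ε, ((((cHess u z)⁻¹) * cHess u w).trace).re := by
          congr 1
          exact integral_congr_ae (Filter.Eventually.of_forall fun w => by show (G w).re = _; rw [hGtrace w])
  have hψint : IntegrableOn (fun w => ψ w ^ ((1:ℝ)/n)) (ball z ε) := by
    refine (((hψc.mono hball).rpow_const ?_).integrableOn_compact
      (isCompact_closedBall z ε)).mono_set ball_subset_closedBall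
    exact fun x hx => Or.inl (hψpos x (hball hx)).ne'
  have hLHS : (n : ℝ) * ψ z ^ (-(1 : ℝ) / n) * (⨍ w in ball z ε, ψ w ^ ((1 : ℝ) / n))
      = c * ∫ w in ball z ε, (n : ℝ) * ψ z ^ (-(1 : ℝ) / n) * ψ w ^ ((1 : ℝ) / n) := by
    rw [setAverage_eq, measureReal_def, smul_eq_mul, integral_const_mul]
    ring
  rw [hLHS, hRHS]
  refine mul_le_mul_of_nonneg_left ?_ hc0
  refine setIntegral_mono_on ?_ ?_ measurableSet_ball ?_
  · exact (hψint.const_mul _)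
  · have : IntegrableOn (fun w => (G w).re) (ball z ε) := hGint.re
    refine this.congr_fun (fun w _ => ?_) measurableSet_ball
    show (G w).re = _
    rw [hGtrace w]
  · intro w hw
    have hwΩ : w ∈ Ω := hsub hw
    have hψw : 0 < ψ w := hψpos w hwΩ
    have := key_trace_ineq hn hA (hpsh w hwΩ) (hMA z hz) (hMA w hwΩ)
    calc (n : ℝ) * ψ z ^ (-(1 : ℝ) / n) * ψ w ^ ((1 : ℝ) / n)
        = (n : ℝ) * (ψ w / ψ z) ^ ((1 : ℝ) / n) := by
          rw [Real.div_rpow hψw.le hψz.le, neg_div, Real.rpow_neg hψz.le]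
          ring
      _ ≤ _ := this
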